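/- If (X̄, ȳ, S̄) is an ε-optimal solution to the refining problem (i.e., A_i • X̄ = 0 for all i, X̄ ⪰ -ηX, S̄ = ηS - Σᵢ ȳᵢAᵢ ⪰ 0, and (ηX + X̄) • S̄ ≤ ε), and (X, y, S) is feasible for the primal-dual SDO pair, then the updated solution (X + (1/η)X̄, y + (1/η)ȳ, C - Σᵢ (yᵢ + (1/η)ȳᵢ)Aᵢ) is feasible for the primal-dual SDO pair. -/

import Mathlib

open Matrix Finset

lemma psd_smul_aux {n : ℕ} {M : Matrix (Fin n) (Fin n) ℝ} {c : ℝ}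
    (hM : M.PosSemidef) (hc : 0 ≤ c) : (c • M).PosSemidef := by
  refine ⟨by have h := hM.1; unfold Matrix.IsHermitian at *; rw [Matrix.conjTranspose_smul, h]; simp, fun x => ?_⟩
  have := hM.2 x
  have h : (x.sum fun i xi => x.sum fun j xj => star xi * (c • M) i j * xj)
      = c * (x.sum fun i xi => x.sum fun j xj => star xi * M i j * xj) := by
    simp only [Finsupp.sum, Finset.mul_sum, Matrix.smul_apply, smul_eq_mul]
    refine Finset.sum_congr rfl fun _ _ => Finset.sum_congr rfl fun _ _ => ?_
    ring
  rw [h]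
  exact mul_nonneg hc this

/-- If `(X̄, ȳ, S̄)` is an ε-optimal solution to the refining problem
(`Aᵢ • X̄ = 0` for all `i`, `X̄ ⪰ -ηX`, `S̄ = ηS - Σᵢ ȳᵢ Aᵢ ⪰ 0`, `(ηX + X̄) • S̄ ≤ ε`),
and `(X, y, S)` is feasible for the primal-dual SDO pair, then the updated solution
`(X + (1/η)X̄, y + (1/η)ȳ, C - Σᵢ (yᵢ + (1/η)ȳᵢ) Aᵢ)` is feasible for the pair. -/
theorem refining_update_feasible {n m : ℕ}
    (A : Fin m → Matrix (Fin n) (Fin n) ℝ) (C : Matrix (Fin n) (Fin n) ℝ)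
    (b : Fin m → ℝ) (ε η : ℝ) (hη : 1 ≤ η)
    (X S Xbar Sbar : Matrix (Fin n) (Fin n) ℝ) (y ybar : Fin m → ℝ)
    -- feasibility of the current iterate (X, y, S)
    (hXfeas : ∀ i, (A i * X).trace = b i) (hXpsd : X.PosSemidef)
    (hSfeas : (∑ i, y i • A i) + S = C) (hSpsd : S.PosSemidef)
    -- ε-optimal solution of the refining problem
    (hXbarfeas : ∀ i, (A i * Xbar).trace = 0)
    (hXbarpsd : (Xbar - (-η) • X).PosSemidef)
    (hSbar : Sbar = η • S - ∑ i, ybar i • A i)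
    (hSbarpsd : Sbar.PosSemidef)
    (hgap : ((η • X + Xbar) * Sbar).trace ≤ ε) :
    -- the updated solution is feasible for the primal-dual SDO pair
    (∀ i, (A i * (X + η⁻¹ • Xbar)).trace = b i) ∧
    (X + η⁻¹ • Xbar).PosSemidef ∧
    (∑ i, (y i + η⁻¹ * ybar i) • A i) +
      (C - ∑ i, (y i + η⁻¹ * ybar i) • A i) = C ∧
    (C - ∑ i, (y i + η⁻¹ * ybar i) • A i).PosSemidef := by
  have hη0 : 0 < η := lt_of_lt_of_le one_pos hη
  have hηinv : 0 ≤ η⁻¹ := le_of_lt (inv_pos.mpr hη0)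
  refine ⟨?_, ?_, by abel, ?_⟩
  · intro i
    rw [mul_add, trace_add, hXfeas i, Matrix.mul_smul, trace_smul, hXbarfeas i]
    simp
  · have : X + η⁻¹ • Xbar = η⁻¹ • (Xbar - (-η) • X) := by
      rw [smul_sub, smul_smul]
      field_simp
      simp only [neg_smul, one_smul, neg_neg, smul_neg]
      abel
    rw [this]
    exact psd_smul_aux hXbarpsd hηinv
  · have hC : C - ∑ i, (y i + η⁻¹ * ybar i) • A i = η⁻¹ • Sbar := by
      rw [hSbar, smul_sub, smul_smul, inv_mul_cancel₀ (ne_of_gt hη0), one_smul,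
        Finset.smul_sum]
      have hsum : ∑ i, (y i + η⁻¹ * ybar i) • A i
          = (∑ i, y i • A i) + ∑ i, η⁻¹ • (ybar i • A i) := by
        rw [← Finset.sum_add_distrib]
        congr 1; ext i
        rw [add_smul, smul_smul]
      rw [hsum, ← hSfeas]
      abel
    rw [hC]
    exact psd_smul_aux hSbarpsd hηinv
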